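/- Let d* be a nonnegative function on X × Y and g : Y → ℝ a nonnegative function such that g(y₁) ≤ ((1+γ)/(1−γ)) d*(x̃_{y₁}, y₁) for all y₁, where x̃_{y₁} = argmin_x d*(x, y₁). Then for any y₀ and any x₀, Σ_{y₁} P(y₁|y₀) g(y₁) ≤ ((1+γ)/(1−γ)) · W₁(d*)(Q(·|x₀), P(·|y₀)) + ((1+γ)/(1−γ)) · Σ_{x₁} Q(x₁|x₀)·0, i.e., the expected value Σ_{y₁} P(y₁|y₀) (1−γ)/(1+γ) g(y₁) is a feasible dual value and hence Σ_{y₁} P(y₁|y₀) g(y₁) ≤ ((1+γ)/(1−γ)) W₁(d*)(Q(·|x₀), P(·|y₀)). -/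
import Mathlib


open scoped BigOperators

noncomputable section

/-- A probability distribution on a finite type, as a nonnegative function summing to 1. -/
def IsProbDist {S : Type*} [Fintype S] (P : S → ℝ) : Prop :=
  (∀ x, 0 ≤ P x) ∧ ∑ x, P x = 1

/-- A coupling of two distributions on finite types. -/
def IsCoupling {S T : Type*} [Fintype S] [Fintype T]
    (Γ : S → T → ℝ) (P : S → ℝ) (Q : T → ℝ) : Prop :=
  (∀ x y, 0 ≤ Γ x y) ∧ (∀ x, ∑ y, Γ x y = P x) ∧ (∀ y, ∑ x, Γ x y = Q y)

/-- 1-Wasserstein distance: minimal transport cost over couplings. -/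
def W1 {S T : Type*} [Fintype S] [Fintype T]
    (d : S → T → ℝ) (P : S → ℝ) (Q : T → ℝ) : ℝ :=
  sInf {c | ∃ Γ, IsCoupling Γ P Q ∧ c = ∑ x, ∑ y, Γ x y * d x y}

/-- A pseudometric: nonnegative, vanishing on the diagonal, symmetric, triangle inequality. -/
def IsPseudometric {S : Type*} (d : S → S → ℝ) : Prop :=
  (∀ x y, 0 ≤ d x y) ∧ (∀ x, d x x = 0) ∧ (∀ x y, d x y = d y x) ∧
    (∀ x y z, d x z ≤ d x y + d y z)

/-- Sup norm distance between two functions on a product of finite types. -/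
def supDist {S T : Type*} [Fintype S] [Fintype T] (d d' : S → T → ℝ) : ℝ :=
  ⨆ p : S × T, |d p.1 p.2 - d' p.1 p.2|

/-- Total variation distance between distributions on a finite action set. -/
def tv {A : Type*} [Fintype A] (p q : A → ℝ) : ℝ := (∑ a, |p a - q a|) / 2

/-- Feasible dual value bound (Lemma secondHalf). -/
theorem second_half {X Y : Type*} [Fintype X] [Fintype Y] [Nonempty X] [Nonempty Y]
    (γ : ℝ) (hγ0 : 0 ≤ γ) (hγ1 : γ < 1)
    (dstar : X → Y → ℝ) (hd0 : ∀ x y, 0 ≤ dstar x y)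
    (xt : Y → X) (hxt : ∀ y x, dstar (xt y) y ≤ dstar x y)
    (g : Y → ℝ) (hg0 : ∀ y, 0 ≤ g y)
    (hg : ∀ y, g y ≤ (1 + γ) / (1 - γ) * dstar (xt y) y)
    (P : Y → ℝ) (hP : IsProbDist P) (Q : X → ℝ) (hQ : IsProbDist Q) :
    ∑ y1, P y1 * g y1 ≤ (1 + γ) / (1 - γ) * W1 dstar Q P := by
  set c := (1 + γ) / (1 - γ) with hc
  have hc0 : 0 < c := div_pos (by linarith) (by linarith)
  have key : ∀ cst ∈ {cst | ∃ Γ, IsCoupling Γ Q P ∧ cst = ∑ x, ∑ y, Γ x y * dstar x y},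
      (∑ y1, P y1 * g y1) / c ≤ cst := by
    rintro cst ⟨Γ, ⟨hΓ0, hΓQ, hΓP⟩, rfl⟩
    rw [div_le_iff₀ hc0]
    calc ∑ y1, P y1 * g y1 = ∑ x, ∑ y, Γ x y * g y := by
          rw [Finset.sum_comm]
          refine Finset.sum_congr rfl fun y _ => ?_
          rw [← hΓP y, Finset.sum_mul]
      _ ≤ ∑ x, ∑ y, Γ x y * (c * dstar x y) := by
          refine Finset.sum_le_sum fun x _ => Finset.sum_le_sum fun y _ => ?_
          refine mul_le_mul_of_nonneg_left ?_ (hΓ0 x y)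
          exact (hg y).trans (mul_le_mul_of_nonneg_left (hxt y x) hc0.le)
      _ = (∑ x, ∑ y, Γ x y * dstar x y) * c := by
          rw [Finset.sum_mul]
          refine Finset.sum_congr rfl fun x _ => ?_
          rw [Finset.sum_mul]
          exact Finset.sum_congr rfl fun y _ => by ring
  have hne : {cst | ∃ Γ, IsCoupling Γ Q P ∧ cst = ∑ x, ∑ y, Γ x y * dstar x y}.Nonempty := by
    refine ⟨_, fun x y => Q x * P y, ⟨fun x y => mul_nonneg (hQ.1 x) (hP.1 y), ?_, ?_⟩, rfl⟩
    · intro x; rw [← Finset.mul_sum, hP.2, mul_one]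
    · intro y; rw [← Finset.sum_mul, hQ.2, one_mul]
  have hW : (∑ y1, P y1 * g y1) / c ≤ W1 dstar Q P := le_csInf hne key
  calc ∑ y1, P y1 * g y1 = c * ((∑ y1, P y1 * g y1) / c) := by field_simp
    _ ≤ c * W1 dstar Q P := mul_le_mul_of_nonneg_left hW hc0.le
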